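/- Let c : ℝⁿ → ℝᵐ be twice continuously differentiable, let x, v : ℝ → ℝⁿ be differentiable curves, and let F : ℝ → ℝⁿ. Suppose that for all t the matrix Dc(x(t)) Dc(x(t))ᵀ is invertible and that v satisfies the constrained dynamics v'(t) = −F(t) − Dc(x(t))ᵀ λ(t), where λ(t) = (Dc(x(t)) Dc(x(t))ᵀ)⁻¹ ( D²c(x(t))[v(t), x'(t)] − Dc(x(t)) F(t) ). Then the function t ↦ Dc(x(t)) v(t) is constant; in particular Dc(x(t)) v(t) = Dc(x(0)) v(0) for all t, so the Lagrange-multiplier term keeps the velocity in the null space of the constraint Jacobian whenever it starts there. -/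

import Mathlib

open Matrix

/-- With the Lagrange multiplier
`λ(t) = (Dc(x(t)) Dc(x(t))ᵀ)⁻¹ (D²c(x(t))[v(t), x'(t)] − Dc(x(t)) F(t))`, the constrained
dynamics `v'(t) = −F(t) − Dc(x(t))ᵀ λ(t)` keeps `t ↦ Dc(x(t)) v(t)` constant:
`Dc(x(t)) v(t) = Dc(x(0)) v(0)` for all `t`. -/
theorem constrained_dynamics_preserves_Dcv {n m : ℕ}
    (c : (Fin n → ℝ) → (Fin m → ℝ)) (hc : ContDiff ℝ 2 c)
    (x v : ℝ → Fin n → ℝ) (F : ℝ → Fin n → ℝ)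
    (hx : Differentiable ℝ x) (hv : Differentiable ℝ v)
    (Dc : (Fin n → ℝ) → Matrix (Fin m) (Fin n) ℝ)
    (hDc : ∀ y : Fin n → ℝ,
      Dc y = LinearMap.toMatrix' (fderiv ℝ c y : (Fin n → ℝ) →ₗ[ℝ] (Fin m → ℝ)))
    (hinv : ∀ t : ℝ, IsUnit (Dc (x t) * (Dc (x t))ᵀ).det)
    (lam : ℝ → Fin m → ℝ)
    (hlam : ∀ t : ℝ, lam t = (Dc (x t) * (Dc (x t))ᵀ)⁻¹ *ᵥ
      ((fderiv ℝ (fun y => fderiv ℝ c y (v t)) (x t)) (deriv x t) - Dc (x t) *ᵥ F t))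
    (hdyn : ∀ t : ℝ, deriv v t = -F t - (Dc (x t))ᵀ *ᵥ lam t) :
    ∀ t : ℝ, Dc (x t) *ᵥ v t = Dc (x 0) *ᵥ v 0 := by
  have hmulVec : ∀ (y w : Fin n → ℝ), Dc y *ᵥ w = fderiv ℝ c y w := by
    intro y w
    rw [hDc y]
    rw [← Matrix.toLin'_apply, Matrix.toLin'_toMatrix']
    rfl
  have hc1 : ContDiff ℝ 1 (fderiv ℝ c) := hc.fderiv_right (le_refl 2)
  have hcd : Differentiable ℝ (fderiv ℝ c) := hc1.differentiable one_ne_zero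
  have hfun : (fun t => Dc (x t) *ᵥ v t) = fun t => fderiv ℝ c (x t) (v t) := by
    funext t; exact hmulVec _ _
  have hC : ∀ s : ℝ, HasDerivAt (fun t => fderiv ℝ c (x t))
      ((fderiv ℝ (fderiv ℝ c) (x s)) (deriv x s)) s := fun s =>
    (hcd (x s)).hasFDerivAt.comp_hasDerivAt s (hx s).hasDerivAt
  have hg : ∀ s : ℝ, HasDerivAt (fun t => fderiv ℝ c (x t) (v t))
      ((fderiv ℝ (fderiv ℝ c) (x s)) (deriv x s) (v s) + fderiv ℝ c (x s) (deriv v s)) s :=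
    fun s => (hC s).clm_apply (hv s).hasDerivAt
  -- identify second-derivative expression
  have hE : ∀ s : ℝ, (fderiv ℝ (fun y => fderiv ℝ c y (v s)) (x s)) (deriv x s)
      = (fderiv ℝ (fderiv ℝ c) (x s)) (deriv x s) (v s) := by
    intro s
    rw [fderiv_clm_apply (hcd (x s)) (differentiableAt_const (v s))]
    simp
  have hzero : ∀ s : ℝ, (fderiv ℝ (fderiv ℝ c) (x s)) (deriv x s) (v s)
      + fderiv ℝ c (x s) (deriv v s) = 0 := by
    intro s
    have h2 : fderiv ℝ c (x s) (deriv v s) = Dc (x s) *ᵥ deriv v s := (hmulVec _ _).symm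
    rw [h2, hdyn s, hlam s]
    rw [Matrix.mulVec_sub, Matrix.mulVec_neg, Matrix.mulVec_mulVec, Matrix.mulVec_mulVec,
      Matrix.mul_nonsing_inv _ (hinv s), Matrix.one_mulVec]
    rw [hE s]
    abel
  intro t
  rw [hmulVec, hmulVec]
  exact is_const_of_deriv_eq_zero
    (fun s => ((hg s).congr_deriv (by rw [hzero s])).differentiableAt)
    (fun s => by rw [(hg s).deriv, hzero s]) t 0
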